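/- Let n be a finite index type, let Z be an n × n complex matrix that is complex symmetric (Zᵀ = Z), write Z = R + iX where R and X are the entrywise real and imaginary parts of Z (so R and X are real symmetric matrices), assume R is positive semidefinite, and let R_d > 0 be a real number. Then for every θ ∈ ℝ^n the matrix A(θ) = i·diag(θ) + R_d·I + Z is invertible, where diag(θ) is the diagonal complex matrix with diagonal entries θ_1, …, θ_n and I is the identity matrix. -/

import Mathlib

open Matrix

/-- **Lemma 3 (invertibility of the loaded impedance matrix).**
If `Z` is complex symmetric with positive semidefinite entrywise real part `R`, and
`R_d > 0`, then `A(θ) = i·diag(θ) + R_d·I + Z` is invertible for every real load vector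
`θ`. -/
theorem loaded_impedance_invertible {n : Type*} [Fintype n] [DecidableEq n]
    (Z : Matrix n n ℂ) (hZsym : Zᵀ = Z)
    (hR : (Matrix.of fun i j => (Z i j).re : Matrix n n ℝ).PosSemidef)
    (Rd : ℝ) (hRd : 0 < Rd) :
    ∀ θ : n → ℝ,
      IsUnit (Complex.I • Matrix.diagonal (fun k => (θ k : ℂ)) +
        (Rd : ℂ) • (1 : Matrix n n ℂ) + Z) := by
  intro θ
  rw [Matrix.isUnit_iff_isUnit_det, isUnit_iff_ne_zero]
  intro hdet
  obtain ⟨v, hv, hAv⟩ := Matrix.exists_mulVec_eq_zero_iff.mpr hdet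
  set a : n → ℝ := fun k => (v k).re with ha
  set b : n → ℝ := fun k => (v k).im with hb
  have hZs : ∀ i j, Z j i = Z i j := fun i j => (congrFun (congrFun hZsym j) i).symm.trans rfl
  have h0 : star v ⬝ᵥ ((Complex.I • Matrix.diagonal (fun k => (θ k : ℂ)) +
        (Rd : ℂ) • (1 : Matrix n n ℂ) + Z) *ᵥ v) = 0 := by
    rw [hAv, dotProduct_zero]
  have hsplit : star v ⬝ᵥ ((Complex.I • Matrix.diagonal (fun k => (θ k : ℂ)) +
        (Rd : ℂ) • (1 : Matrix n n ℂ) + Z) *ᵥ v)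
      = Complex.I * (star v ⬝ᵥ (Matrix.diagonal (fun k => (θ k : ℂ)) *ᵥ v))
        + (Rd : ℂ) * (star v ⬝ᵥ v) + star v ⬝ᵥ (Z *ᵥ v) := by
    simp [Matrix.add_mulVec, Matrix.smul_mulVec, dotProduct_add,
      dotProduct_smul, Matrix.one_mulVec, smul_eq_mul]
  -- T1
  have hT1im : (star v ⬝ᵥ (Matrix.diagonal (fun k => (θ k : ℂ)) *ᵥ v)).im = 0 := by
    have : star v ⬝ᵥ (Matrix.diagonal (fun k => (θ k : ℂ)) *ᵥ v)
        = ∑ k, (starRingEnd ℂ) (v k) * ((θ k : ℂ) * v k) := by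
      simp [dotProduct, Matrix.mulVec_diagonal]
    rw [this, Complex.im_sum]
    refine Finset.sum_eq_zero fun k _ => ?_
    simp [Complex.mul_im, Complex.mul_re]
    ring
  -- T2
  have hT2 : ((Rd : ℂ) * (star v ⬝ᵥ v)).re = Rd * ∑ k, Complex.normSq (v k) := by
    have : star v ⬝ᵥ v = ∑ k, (starRingEnd ℂ) (v k) * v k := by
      simp [dotProduct]
    rw [this]
    simp [Complex.mul_re, Complex.re_sum, Complex.im_sum, Finset.mul_sum, Complex.normSq_apply]
  -- T3
  have hT3 : (star v ⬝ᵥ (Z *ᵥ v)).re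
      = (∑ i, ∑ j, (Z i j).re * (a i * a j + b i * b j))
        + ∑ i, ∑ j, (Z i j).im * (b i * a j - a i * b j) := by
    have : star v ⬝ᵥ (Z *ᵥ v) = ∑ i, ∑ j, (starRingEnd ℂ) (v i) * (Z i j * v j) := by
      simp [dotProduct, Matrix.mulVec, Finset.mul_sum]
    rw [this, Complex.re_sum, ← Finset.sum_add_distrib]
    refine Finset.sum_congr rfl fun i _ => ?_
    rw [Complex.re_sum, ← Finset.sum_add_distrib]
    refine Finset.sum_congr rfl fun j _ => ?_
    simp [Complex.mul_re, Complex.mul_im, ha, hb]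
    ring
  -- X part vanishes
  have hX0 : (∑ i, ∑ j, (Z i j).im * (b i * a j - a i * b j)) = 0 := by
    have hswap : (∑ i, ∑ j, (Z i j).im * (b i * a j - a i * b j))
        = ∑ i, ∑ j, (Z j i).im * (b j * a i - a j * b i) := Finset.sum_comm
    have hneg : (∑ i, ∑ j, (Z j i).im * (b j * a i - a j * b i))
        = -∑ i, ∑ j, (Z i j).im * (b i * a j - a i * b j) := by
      rw [← Finset.sum_neg_distrib]
      refine Finset.sum_congr rfl fun i _ => ?_
      rw [← Finset.sum_neg_distrib]
      refine Finset.sum_congr rfl fun j _ => ?_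
      rw [hZs i j]
      ring
    have := hswap.trans hneg
    linarith
  -- quadratic forms nonneg
  have hqa : 0 ≤ ∑ i, ∑ j, (Z i j).re * (a i * a j) := by
    have := hR.dotProduct_mulVec_nonneg a
    simpa [dotProduct, Matrix.mulVec, Finset.mul_sum, mul_comm, mul_assoc, mul_left_comm] using this
  have hqb : 0 ≤ ∑ i, ∑ j, (Z i j).re * (b i * b j) := by
    have := hR.dotProduct_mulVec_nonneg b
    simpa [dotProduct, Matrix.mulVec, Finset.mul_sum, mul_comm, mul_assoc, mul_left_comm] using this
  -- norm positive
  have hnorm : 0 < ∑ k, Complex.normSq (v k) := by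
    obtain ⟨k, hk⟩ := Function.ne_iff.mp hv
    exact Finset.sum_pos' (fun i _ => Complex.normSq_nonneg _)
      ⟨k, Finset.mem_univ k, Complex.normSq_pos.mpr hk⟩
  -- combine
  have hre0 : Complex.I.re * (star v ⬝ᵥ (Matrix.diagonal (fun k => (θ k : ℂ)) *ᵥ v)).re
      - Complex.I.im * (star v ⬝ᵥ (Matrix.diagonal (fun k => (θ k : ℂ)) *ᵥ v)).im
      + ((Rd : ℂ) * (star v ⬝ᵥ v)).re + (star v ⬝ᵥ (Z *ᵥ v)).re = 0 := by
    have := congrArg Complex.re (hsplit.symm.trans h0)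
    simpa [Complex.add_re, Complex.mul_re] using this
  rw [hT1im, hT2, hT3, hX0] at hre0
  simp at hre0
  have hsum : (∑ i, ∑ j, (Z i j).re * (a i * a j + b i * b j))
      = (∑ i, ∑ j, (Z i j).re * (a i * a j)) + ∑ i, ∑ j, (Z i j).re * (b i * b j) := by
    rw [← Finset.sum_add_distrib]
    refine Finset.sum_congr rfl fun i _ => ?_
    rw [← Finset.sum_add_distrib]
    exact Finset.sum_congr rfl fun j _ => by ring
  rw [hsum] at hre0
  nlinarith [mul_pos hRd hnorm]
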